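/- Let M be a matroid on a finite ground set E and let F ⊆ G ⊆ E. Then the dual of the minor M(G)/F equals the minor M*(E \ F)/(E \ G) of the dual matroid M*. Consequently, if ∅ = F'_ε ⊂ … ⊂ F'_0 = F_c = F_0 ⊂ … ⊂ F_ι = E is a connected filtration of M (with E linearly ordered), then ∅ = E \ F_ι ⊂ … ⊂ E \ F_0 = E \ F_c = E \ F'_0 ⊂ … ⊂ E \ F'_ε = E is a connected filtration of M* with cyclic flat E \ F_c, and the minors it induces are the duals of the minors induced by the original filtration. Moreover, ∅ = F'_ε ⊂ … ⊂ F'_0 = F_c is a connected filtration of M(F_c) with cyclic flat F_c, and ∅ = F_0 \ F_c ⊂ … ⊂ F_ι \ F_c = E \ F_c is a connected filtration of M/F_c with cyclic flat ∅. -/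

import Mathlib

open Matroid Set

namespace ActiveBij

variable {α : Type*}

/-- Deletion of a set of elements from a matroid. -/
def del (M : Matroid α) (D : Set α) : Matroid α := M ↾ (M.E \ D)

/-- Contraction of a set of elements of a matroid. -/
def con (M : Matroid α) (C : Set α) : Matroid α := (del M✶ C)✶

/-- The minor `M(G)/F` : restriction to `G` followed by contraction of `F`. -/
def minor (M : Matroid α) (G F : Set α) : Matroid α := con (M ↾ G) F

/-- A circuit of a matroid : a minimal dependent set. -/
def Cct (M : Matroid α) (C : Set α) : Prop := Minimal M.Dep C

/-- A cocircuit of a matroid : a circuit of the dual. -/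
def Cocct (M : Matroid α) (C : Set α) : Prop := Cct M✶ C

/-- The fundamental circuit of `e ∉ B` with respect to a base `B` :
the unique circuit contained in `B ∪ {e}`. -/
def fundCct (M : Matroid α) (B : Set α) (e : α) : Set α :=
  ⋂₀ {C | Cct M C ∧ C ⊆ insert e B}

/-- The fundamental cocircuit of `b ∈ B` with respect to a base `B` :
the unique cocircuit contained in `(E \ B) ∪ {b}`. -/
def fundCocct (M : Matroid α) (B : Set α) (b : α) : Set α :=
  ⋂₀ {C | Cocct M C ∧ C ⊆ insert b (M.E \ B)}

/-- The set of internally active elements of a base `B` :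
elements `b ∈ B` that are the minimum of their fundamental cocircuit. -/
def ActInt [LinearOrder α] (M : Matroid α) (B : Set α) : Set α :=
  {b ∈ B | IsLeast (fundCocct M B b) b}

/-- The set of externally active elements of a base `B` :
elements `e ∈ M.E \ B` that are the minimum of their fundamental circuit. -/
def ActExt [LinearOrder α] (M : Matroid α) (B : Set α) : Set α :=
  {e ∈ M.E \ B | IsLeast (fundCct M B e) e}

/-- A uniactive internal base : internal activity `1` and external activity `0`. -/
def UIntBase [LinearOrder α] (M : Matroid α) (B : Set α) : Prop :=
  M.IsBase B ∧ (ActInt M B).ncard = 1 ∧ (ActExt M B).ncard = 0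

/-- A uniactive external base : internal activity `0` and external activity `1`. -/
def UExtBase [LinearOrder α] (M : Matroid α) (B : Set α) : Prop :=
  M.IsBase B ∧ (ActInt M B).ncard = 0 ∧ (ActExt M B).ncard = 1

/-- `β(M)` : the number of uniactive internal bases. -/
noncomputable def beta [LinearOrder α] (M : Matroid α) : ℕ :=
  {B : Set α | UIntBase M B}.ncard

/-- `β*(M)` : the number of uniactive external bases. -/
noncomputable def betaStar [LinearOrder α] (M : Matroid α) : ℕ :=
  {B : Set α | UExtBase M B}.ncard

/-- A connected matroid : any two elements of the ground set lie on a common circuit. -/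
def Conn (M : Matroid α) : Prop :=
  M.E.Nonempty ∧ ∀ ⦃x y⦄, x ∈ M.E → y ∈ M.E →
    (x = y ∨ ∃ C, Cct M C ∧ x ∈ C ∧ y ∈ C)

/-- A matroid consisting of a single loop. -/
def IsLoopMatroid (M : Matroid α) : Prop := ∃ e, M.E = {e} ∧ M.Dep {e}

/-- A matroid consisting of a single coloop (isthmus). -/
def IsColoopMatroid (M : Matroid α) : Prop := ∃ e, M.E = {e} ∧ M.Indep {e}

/-- A flat : a subset of the ground set whose complement is a union of cocircuits. -/
def IsFlat (M : Matroid α) (F : Set α) : Prop :=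
  F ⊆ M.E ∧ ∃ S : Set (Set α), (∀ C ∈ S, Cocct M C) ∧ M.E \ F = ⋃₀ S

/-- A dual-flat : a union of circuits. -/
def IsDualFlat (M : Matroid α) (F : Set α) : Prop :=
  ∃ S : Set (Set α), (∀ C ∈ S, Cct M C) ∧ F = ⋃₀ S

/-- A cyclic flat : both a flat and a dual-flat. -/
def IsCyclicFlat (M : Matroid α) (F : Set α) : Prop :=
  IsFlat M F ∧ IsDualFlat M F

/-- The data of a filtration : `∅ = F'_ε ⊂ ⋯ ⊂ F'_0 = F_c = F_0 ⊂ ⋯ ⊂ F_ι = E`. -/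
structure Filtration (α : Type*) where
  ι : ℕ
  ε : ℕ
  F : Fin (ι + 1) → Set α
  F' : Fin (ε + 1) → Set α

/-- The `k`-th internal minor `M(F_k)/F_{k-1}` induced by a filtration. -/
def intMinor (M : Matroid α) (f : Filtration α) (k : Fin f.ι) : Matroid α :=
  minor M (f.F k.succ) (f.F k.castSucc)

/-- The `k`-th external minor `M(F'_{k-1})/F'_k` induced by a filtration. -/
def extMinor (M : Matroid α) (f : Filtration α) (k : Fin f.ε) : Matroid α :=
  minor M (f.F' k.castSucc) (f.F' k.succ)

/-- The filtration property : strictly nested subsets from `∅` to `M.E` through `F_c`,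
with the minima of the successive differences increasing on each side of `F_c`. -/
def IsFiltration [LinearOrder α] (M : Matroid α) (f : Filtration α) : Prop :=
  f.F' (Fin.last f.ε) = ∅ ∧
  f.F' 0 = f.F 0 ∧
  f.F (Fin.last f.ι) = M.E ∧
  (∀ k : Fin f.ι, f.F k.castSucc ⊂ f.F k.succ) ∧
  (∀ k : Fin f.ε, f.F' k.succ ⊂ f.F' k.castSucc) ∧
  (∀ j k : Fin f.ι, j < k → ∀ a b : α,
    IsLeast (f.F j.succ \ f.F j.castSucc) a →
    IsLeast (f.F k.succ \ f.F k.castSucc) b → a < b) ∧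
  (∀ j k : Fin f.ε, j < k → ∀ a b : α,
    IsLeast (f.F' j.castSucc \ f.F' j.succ) a →
    IsLeast (f.F' k.castSucc \ f.F' k.succ) b → a < b)

/-- A connected filtration : a filtration all of whose induced internal minors are
connected and not single loops, and all of whose induced external minors are connected
and not single coloops. -/
def IsConnFiltration [LinearOrder α] (M : Matroid α) (f : Filtration α) : Prop :=
  IsFiltration M f ∧
  (∀ k : Fin f.ι, Conn (intMinor M f k) ∧ ¬ IsLoopMatroid (intMinor M f k)) ∧
  (∀ k : Fin f.ε, Conn (extMinor M f k) ∧ ¬ IsColoopMatroid (extMinor M f k))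

/-- An active filtration of a base `B` : a filtration such that `B` induces a uniactive
internal base of each internal minor and a uniactive external base of each external minor. -/
def IsActiveFiltration [LinearOrder α] (M : Matroid α) (B : Set α) (f : Filtration α) : Prop :=
  IsFiltration M f ∧
  (∀ k : Fin f.ι, UIntBase (intMinor M f k) (B ∩ (f.F k.succ \ f.F k.castSucc))) ∧
  (∀ k : Fin f.ε, UExtBase (extMinor M f k) (B ∩ (f.F' k.castSucc \ f.F' k.succ)))

/-- The subset `F(X)` attached to a base `B` and a set `X` of internally active elements :
`B ∩ F` is a base of `M(F)`, the activities of the induced bases of `M(F)` and `M/F`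
split those of `B`, with `Int` of the contraction part equal to `X`. -/
def DecompSet [LinearOrder α] (M : Matroid α) (B X F : Set α) : Prop :=
  F ⊆ M.E ∧
  (M ↾ F).IsBase (B ∩ F) ∧
  ActInt (M ↾ F) (B ∩ F) = ActInt M B \ X ∧
  ActExt (M ↾ F) (B ∩ F) = ActExt M B ∧
  ActInt (con M F) (B \ F) = X ∧
  ActExt (con M F) (B \ F) = ∅

/-- The dual of a filtration : complement every subset and exchange the two sides. -/
def dualFil (M : Matroid α) (f : Filtration α) : Filtration α :=
  ⟨f.ε, f.ι, fun k => M.E \ f.F' k, fun k => M.E \ f.F k⟩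

/-- The set of subsets occurring in a filtration. -/
def termsOf (f : Filtration α) : Set (Set α) :=
  {H | ∃ k, f.F k = H} ∪ {H | ∃ k, f.F' k = H}


@[simp] lemma del_ground (M : Matroid α) (D : Set α) : (del M D).E = M.E \ D := rfl
@[simp] lemma con_ground (M : Matroid α) (C : Set α) : (con M C).E = M.E \ C := rfl

@[simp] lemma del_indep_iff {M : Matroid α} {D I : Set α} :
    (del M D).Indep I ↔ M.Indep I ∧ I ⊆ M.E \ D := Iff.rfl

lemma restrict_eq_del (M : Matroid α) {X : Set α} (hX : X ⊆ M.E) :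
    M ↾ X = del M (M.E \ X) := by
  rw [del, diff_diff_cancel_left hX]

lemma dual_del (M : Matroid α) (D : Set α) : (del M D)✶ = con M✶ D := by
  rw [con, dual_dual]

lemma dual_con (M : Matroid α) (C : Set α) : (con M C)✶ = del M✶ C := by
  rw [con, dual_dual]

lemma del_del (M : Matroid α) (D₁ D₂ : Set α) :
    del (del M D₁) D₂ = del M (D₁ ∪ D₂) := by
  unfold del
  rw [restrict_ground_eq, diff_diff, restrict_restrict_eq _ (diff_subset_diff_right subset_union_left)]

lemma con_con (M : Matroid α) (C₁ C₂ : Set α) :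
    con (con M C₁) C₂ = con M (C₁ ∪ C₂) := by
  rw [con, show (con M C₁)✶ = del M✶ C₁ from dual_con M C₁, del_del]; rfl



variable {M : Matroid α} {C D I J B X : Set α}

lemma con_indep_iff_exists :
    (con M C).Indep J ↔ J ⊆ M.E \ C ∧ ∃ B, M✶.IsBasis B (M.E \ C) ∧ Disjoint J B := by
  rw [con, dual_indep_iff_exists']
  simp only [del_ground, dual_ground]
  refine and_congr Iff.rfl (exists_congr fun B => and_congr ?_ Iff.rfl)
  rw [del, dual_ground, isBase_restrict_iff']
  exact ⟨fun h => h.isBasis (show M.E \ C ⊆ M✶.E by rw [dual_ground]; exact diff_subset),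
    fun h => h.isBasis'⟩

lemma indep_con_indep_iff (hI : M.Indep I) :
    (con M I).Indep J ↔ Disjoint J I ∧ M.Indep (J ∪ I) := by
  rw [con_indep_iff_exists]
  constructor
  · rintro ⟨hJE, B, hB, hJB⟩
    have hsp : M✶.Spanning (M.E \ I) := by
      rw [← dual_ground, ← coindep_iff_compl_spanning, dual_coindep_iff]
      exact hI
    have hBbase : M✶.IsBase B := hB.indep.isBase_of_spanning
      ⟨by rw [hB.closure_eq_closure, hsp.closure_eq], hB.indep.subset_ground⟩
    have hBm : M.IsBase (M.E \ B) := hBbase.compl_isBase_of_dual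
    have hIB : Disjoint I B := (subset_diff.mp hB.subset).2.symm
    refine ⟨(subset_diff.mp hJE).2, hBm.indep.subset (union_subset ?_ ?_)⟩
    · exact subset_diff.2 ⟨hJE.trans diff_subset, hJB⟩
    · exact subset_diff.2 ⟨hI.subset_ground, hIB⟩
  · rintro ⟨hJI, hJIi⟩
    obtain ⟨Bm, hBm, hss⟩ := hJIi.exists_isBase_superset
    have heI : I ⊆ Bm := subset_union_right.trans hss
    refine ⟨subset_diff.2 ⟨(subset_union_left.trans hss).trans hBm.subset_ground, hJI⟩,
      M.E \ Bm, ?_, ?_⟩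
    · refine (hBm.compl_isBase_dual.indep.isBasis_of_forall_insert
        (subset_diff.2 ⟨diff_subset, (Disjoint.mono_right heI disjoint_sdiff_left)⟩) ?_)
      intro e he
      have heBm : e ∈ Bm := by
        by_contra h
        exact he.2 ⟨he.1.1, h⟩
      rw [dep_iff]
      constructor
      · intro hind
        obtain ⟨-, B₂, hB₂, hdj⟩ := dual_indep_iff_exists'.mp hind
        have hB₂Bm : B₂ ⊆ Bm \ {e} := by
          intro x hx
          refine ⟨?_, ?_⟩
          · by_contra hxBm
            exact hdj.symm.ne_of_mem hx (mem_insert_of_mem _ ⟨hB₂.subset_ground hx, hxBm⟩) rfl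
          · rintro rfl
            exact hdj.symm.ne_of_mem hx (mem_insert _ _) rfl
        have hBe := hB₂.eq_of_subset_indep hBm.indep (hB₂Bm.trans diff_subset)
        rw [hBe] at hB₂Bm
        exact (hB₂Bm heBm).2 rfl
      · rw [dual_ground]
        exact insert_subset he.1.1 diff_subset
    · exact Disjoint.mono_left (subset_union_left.trans hss) disjoint_sdiff_right

lemma basis_con_indep_iff (hIC : M.IsBasis I C) :
    (con M C).Indep J ↔ J ⊆ M.E \ C ∧ M.Indep (J ∪ I) := by
  have hCE : C ⊆ M.E := hIC.subset_ground
  have hIsubC : I ⊆ C := hIC.subset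
  rw [con_indep_iff_exists]
  constructor
  · rintro ⟨hJE, B, hB, hJB⟩
    have hBEC : B ⊆ M.E \ C := hB.subset
    have hSE : B ∪ (C \ I) ⊆ M✶.E := by
      rw [dual_ground]
      exact union_subset (hBEC.trans diff_subset) (diff_subset.trans hCE)
    obtain ⟨B₂, hB₂, hBB₂⟩ := hB.indep.subset_isBasis_of_subset subset_union_left hSE
    have hspan : M✶.Spanning (M.E \ I) := by
      rw [← dual_ground, ← coindep_iff_compl_spanning, dual_coindep_iff]
      exact hIC.indep
    have hsp : M✶.E ⊆ M✶.closure (B ∪ (C \ I)) := by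
      have h2 : M.E \ I ⊆ M✶.closure B ∪ (C \ I) := by
        intro x hx
        by_cases hxC : x ∈ C
        · exact Or.inr ⟨hxC, hx.2⟩
        · exact Or.inl (hB.subset_closure ⟨hx.1, hxC⟩)
      calc M✶.E = M✶.closure (M.E \ I) := hspan.closure_eq.symm
        _ ⊆ M✶.closure (M✶.closure B ∪ (C \ I)) := M✶.closure_subset_closure h2
        _ = M✶.closure (B ∪ (C \ I)) := M✶.closure_union_closure_left_eq _ _
    have hB₂base : M✶.IsBase B₂ := hB₂.indep.isBase_of_spanning
      ⟨by rw [hB₂.closure_eq_closure]; exact (M✶.closure_subset_ground _).antisymm hsp,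
        hB₂.indep.subset_ground⟩
    have hBm : M.IsBase (M.E \ B₂) := hB₂base.compl_isBase_of_dual
    have hB₂sub : B₂ ⊆ B ∪ (C \ I) := hB₂.subset
    refine ⟨hJE, hBm.indep.subset (union_subset ?_ ?_)⟩
    · refine subset_diff.2 ⟨hJE.trans diff_subset, Disjoint.mono_right hB₂sub ?_⟩
      exact disjoint_union_right.2 ⟨hJB, Disjoint.mono_right diff_subset
        (disjoint_sdiff_left.mono_left hJE)⟩
    · refine subset_diff.2 ⟨hIsubC.trans hCE, Disjoint.mono_right hB₂sub ?_⟩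
      exact disjoint_union_right.2 ⟨Disjoint.mono_right hBEC
        (disjoint_sdiff_right.mono_left hIsubC), disjoint_sdiff_right⟩
  · rintro ⟨hJE, hind⟩
    obtain ⟨Bm, hBm, hss⟩ := hind.exists_isBase_superset
    have hIBm : I ⊆ Bm := subset_union_right.trans hss
    have hJBm : J ⊆ Bm := subset_union_left.trans hss
    refine ⟨hJE, (M.E \ Bm) \ C, ?_, ?_⟩
    · refine ((hBm.compl_isBase_dual.indep.subset diff_subset).isBasis_of_forall_insert
        (diff_subset_diff_left diff_subset) ?_)
      intro x hx
      have hxBm : x ∈ Bm := by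
        by_contra h
        exact hx.2 ⟨⟨hx.1.1, h⟩, hx.1.2⟩
      have hxC : x ∉ C := hx.1.2
      have hxI : x ∉ I := fun h => hxC (hIsubC h)
      rw [dep_iff]
      constructor
      · intro hindep
        obtain ⟨-, B₂, hB₂, hdj⟩ := dual_indep_iff_exists'.mp hindep
        have hB₂sub : B₂ ⊆ (Bm ∪ C) \ {x} := by
          intro z hz
          have hzE := hB₂.subset_ground hz
          have hzx : z ≠ x := fun h =>
            hdj.symm.ne_of_mem hz (h ▸ mem_insert _ _) rfl
          refine ⟨?_, hzx⟩
          by_contra hzBC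
          exact hdj.symm.ne_of_mem hz
            (mem_insert_of_mem _ ⟨⟨hzE, fun h => hzBC (Or.inl h)⟩,
              fun h => hzBC (Or.inr h)⟩) rfl
        have hBC : (Bm ∪ C) \ {x} = (Bm \ {x}) ∪ C := by
          ext z
          simp only [mem_diff, mem_union, mem_singleton_iff]
          constructor
          · rintro ⟨(h | h), hz⟩
            · exact Or.inl ⟨h, hz⟩
            · exact Or.inr h
          · rintro (⟨h, hz⟩ | h)
            · exact ⟨Or.inl h, hz⟩
            · exact ⟨Or.inr h, fun he => hxC (he ▸ h)⟩
        have hEsub : M.E ⊆ M.closure (Bm \ {x}) := by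
          calc M.E = M.closure B₂ := hB₂.closure_eq.symm
            _ ⊆ M.closure ((Bm \ {x}) ∪ C) := M.closure_subset_closure (hB₂sub.trans hBC.subset)
            _ ⊆ M.closure ((Bm \ {x}) ∪ M.closure I) :=
                M.closure_subset_closure (union_subset_union_right _ hIC.subset_closure)
            _ = M.closure ((Bm \ {x}) ∪ I) := M.closure_union_closure_right_eq _ _
            _ = M.closure (Bm \ {x}) := by
                rw [union_eq_self_of_subset_right (subset_diff_singleton hIBm hxI)]
        exact hBm.indep.notMem_closure_diff_of_mem hxBm (hEsub (hBm.subset_ground hxBm))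
      · rw [dual_ground]
        exact insert_subset hx.1.1 (diff_subset.trans diff_subset)
    · exact Disjoint.mono_right diff_subset (disjoint_sdiff_right.mono_left hJBm)

lemma con_del_comm (hC : C ⊆ M.E) (_hD : D ⊆ M.E) (hdj : Disjoint C D) :
    con (del M D) C = del (con M C) D := by
  have hCD : C ⊆ M.E \ D := subset_diff.2 ⟨hC, hdj⟩
  obtain ⟨I, hIC⟩ := M.exists_isBasis C hC
  have hIC' : (del M D).IsBasis I C := by
    rw [del, isBasis_restrict_iff diff_subset]
    exact ⟨hIC, hCD⟩
  refine ext_indep (by simp [diff_diff_comm]) (fun J hJ => ?_)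
  rw [con_ground, del_ground] at hJ
  rw [basis_con_indep_iff hIC', del_indep_iff, del_indep_iff,
    basis_con_indep_iff hIC]
  simp only [con_ground, del_ground]
  constructor
  · rintro ⟨hJ1, hJ2, -⟩
    exact ⟨⟨hJ1.trans (show (M.E \ D) \ C ⊆ M.E \ C from
      diff_subset_diff_left diff_subset), hJ2⟩, diff_diff_comm (s := M.E) ▸ hJ1⟩
  · rintro ⟨⟨hJ1, hJ2⟩, hJ3⟩
    have hJ4 : J ⊆ (M.E \ D) \ C := diff_diff_comm (s := M.E) ▸ hJ3
    exact ⟨hJ4, hJ2, union_subset (hJ4.trans diff_subset) (hIC.subset.trans hCD)⟩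


@[simp] lemma minor_ground (M : Matroid α) (G F : Set α) : (minor M G F).E = G \ F := rfl

lemma minor_dual {M : Matroid α} {F G : Set α} (hFG : F ⊆ G) (hG : G ⊆ M.E) :
    (minor M G F)✶ = minor M✶ (M.E \ F) (M.E \ G) := by
  have hF : F ⊆ M.E := hFG.trans hG
  rw [minor, restrict_eq_del M hG, dual_con, dual_del, minor,
    restrict_eq_del M✶ (show M.E \ F ⊆ M✶.E by rw [dual_ground]; exact diff_subset),
    dual_ground, diff_diff_cancel_left hF,
    con_del_comm (show M.E \ G ⊆ M✶.E by rw [dual_ground]; exact diff_subset)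
      (show F ⊆ M✶.E by rw [dual_ground]; exact hF)
      (disjoint_sdiff_left.mono_right hFG)]

lemma minor_restrict {M : Matroid α} {R G F : Set α} (h : G ⊆ R) :
    minor (M ↾ R) G F = minor M G F := by
  rw [minor, minor, restrict_restrict_eq M h]

lemma minor_con_eq {M : Matroid α} {F₀ Cs S : Set α} (hF0C : F₀ ⊆ Cs) (hCS : Cs ⊆ S)
    (hS : S ⊆ M.E) : minor (con M F₀) (S \ F₀) (Cs \ F₀) = minor M S Cs := by
  have hF0S : F₀ ⊆ S := hF0C.trans hCS
  have hF0 : F₀ ⊆ M.E := hF0S.trans hS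
  have hdj : Disjoint F₀ (M.E \ S) := disjoint_sdiff_right.mono_left hF0S
  have hset1 : (M.E \ F₀) \ (S \ F₀) = M.E \ S := by
    ext x
    simp only [mem_diff, not_and, not_not]
    constructor
    · rintro ⟨⟨hxE, hxF⟩, h⟩
      exact ⟨hxE, fun hxS => hxF (h hxS)⟩
    · rintro ⟨hxE, hxS⟩
      exact ⟨⟨hxE, fun h => hxS (hF0S h)⟩, fun h => absurd h hxS⟩
  rw [minor, restrict_eq_del (con M F₀) (show S \ F₀ ⊆ (con M F₀).E from
    diff_subset_diff_left hS), con_ground, hset1,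
    ← con_del_comm hF0 diff_subset hdj, con_con, union_diff_cancel hF0C,
    minor, restrict_eq_del M hS]

/-! ### Circuits -/

variable {C₁ C₂ : Set α} {e x y : α}

lemma Cct.dep (h : Cct M C) : M.Dep C := h.1

lemma Cct.subset_ground (h : Cct M C) : C ⊆ M.E := h.1.subset_ground

lemma Cct.ssubset_indep (h : Cct M C) (hX : X ⊂ C) : M.Indep X := by
  by_contra hind
  have hdep : M.Dep X := ⟨hind, hX.subset.trans h.subset_ground⟩
  exact hX.not_subset (h.2 hdep hX.subset)

lemma Cct.eq_of_cct_subset (h : Cct M C) (h' : Cct M C₁) (hsub : C₁ ⊆ C) : C₁ = C :=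
  hsub.antisymm (h.2 h'.1 hsub)

lemma exists_cct_of_dep (M : Matroid α) [M.Finite] (hX : M.Dep X) :
    ∃ C, Cct M C ∧ C ⊆ X := by
  have hfin : {Y | Y ⊆ X ∧ M.Dep Y}.Finite :=
    ((M.ground_finite.subset hX.subset_ground).finite_subsets).subset fun Y hY => hY.1
  obtain ⟨C, hC, hmin⟩ := Set.Finite.exists_minimal hfin ⟨X, subset_rfl, hX⟩
  refine ⟨C, ⟨hC.2, fun Y hY hYC => ?_⟩, hC.1⟩
  have hYeq : C ⊆ Y := hmin ⟨hYC.trans hC.1, hY⟩ hYC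
  exact hYeq

lemma cct_elim [M.Finite] (hC₁ : Cct M C₁) (hC₂ : Cct M C₂) (hne : C₁ ≠ C₂)
    (he : e ∈ C₁ ∩ C₂) : M.Dep ((C₁ ∪ C₂) \ {e}) := by
  set X := (C₁ ∪ C₂) \ {e} with hXdef
  have hXE : X ⊆ M.E := diff_subset.trans (union_subset hC₁.subset_ground hC₂.subset_ground)
  rw [← not_indep_iff hXE]
  intro hXind
  obtain ⟨f, hfC₂, hfC₁⟩ : ∃ f, f ∈ C₂ ∧ f ∉ C₁ := by
    by_contra h
    push_neg at h
    exact hne (hC₁.eq_of_cct_subset hC₂ (fun z hz => h z hz)).symm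
  have hfe : f ≠ e := fun h => hfC₁ (h ▸ he.1)
  have hfX : f ∈ X := ⟨Or.inr hfC₂, hfe⟩
  have hC₁sub : C₁ \ {e} ⊆ X \ {f} := by
    intro z hz
    exact ⟨⟨Or.inl hz.1, hz.2⟩, fun h => hfC₁ (mem_singleton_iff.mp h ▸ hz.1)⟩
  have hC₂sub : C₂ \ {f} ⊆ insert e (X \ {f}) := by
    intro z hz
    rcases eq_or_ne z e with rfl | hze
    · exact mem_insert _ _
    · exact mem_insert_of_mem _ ⟨⟨Or.inr hz.1, hze⟩, hz.2⟩
  have heC₁ : e ∈ M.closure (C₁ \ {e}) := by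
    rw [(hC₁.ssubset_indep (sdiff_singleton_ssubset.2 he.1)).mem_closure_iff]
    left
    rw [insert_diff_singleton, insert_eq_of_mem he.1]
    exact hC₁.dep
  have hfC₂cl : f ∈ M.closure (C₂ \ {f}) := by
    rw [(hC₂.ssubset_indep (sdiff_singleton_ssubset.2 hfC₂)).mem_closure_iff]
    left
    rw [insert_diff_singleton, insert_eq_of_mem hfC₂]
    exact hC₂.dep
  have hecl : e ∈ M.closure (X \ {f}) := M.closure_subset_closure hC₁sub heC₁
  have hfcl : f ∈ M.closure (X \ {f}) := by
    have : f ∈ M.closure (insert e (X \ {f})) :=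
      M.closure_subset_closure hC₂sub hfC₂cl
    rwa [closure_insert_eq_of_mem_closure hecl] at this
  exact hXind.notMem_closure_diff_of_mem hfX hfcl

/-! ### Common circuits and base exchange -/

/-- Exchange predicate relating two elements. -/
def ExchPair (M : Matroid α) (x y : α) : Prop :=
  ∃ B, M.IsBase B ∧ x ∈ B ∧ y ∉ B ∧ M.IsBase (insert y (B \ {x}))

lemma exchPair_of_cct [M.Finite] (hC : Cct M C) (hx : x ∈ C) (hy : y ∈ C) (hxy : x ≠ y) :
    ExchPair M x y := by
  have hCE := hC.subset_ground
  have hCy : M.Indep (C \ {y}) := hC.ssubset_indep (sdiff_singleton_ssubset.2 hy)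
  obtain ⟨B, hB, hCB⟩ := hCy.exists_isBase_superset
  have hyB : y ∉ B := by
    intro hyB
    have : C ⊆ B := by
      intro z hz
      rcases eq_or_ne z y with rfl | hzy
      · exact hyB
      · exact hCB ⟨hz, hzy⟩
    exact hC.dep.not_indep (hB.indep.subset this)
  have hxB : x ∈ B := hCB ⟨hx, hxy⟩
  refine ⟨B, hB, hxB, hyB, hB.exchange_isBase_of_indep hyB ?_⟩
  rw [← not_dep_iff (insert_subset (hCE hy) (diff_subset.trans hB.subset_ground))]
  intro hdep
  obtain ⟨C', hC', hC'sub⟩ := exists_cct_of_dep M hdep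
  have hyC' : y ∈ C' := by
    by_contra hyC'
    refine hC'.dep.not_indep (hB.indep.subset ?_)
    intro z hz
    rcases hC'sub hz with rfl | hzB
    · exact absurd hz hyC'
    · exact hzB.1
  have hxC' : x ∉ C' := by
    intro hxC'
    rcases hC'sub hxC' with h | h
    · exact hxy h
    · exact h.2 rfl
  have hCC' : C ≠ C' := fun h => hxC' (h ▸ hx)
  have hdep2 := cct_elim hC hC' (by exact hCC') ⟨hy, hyC'⟩
  refine hdep2.not_indep (hB.indep.subset ?_)
  rintro z ⟨(hz | hz), hzy⟩
  · exact hCB ⟨hz, hzy⟩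
  · rcases hC'sub hz with h | h
    · exact absurd h hzy
    · exact h.1

lemma cct_of_exchPair [M.Finite] (hyE : y ∈ M.E) (h : ExchPair M x y) :
    ∃ C, Cct M C ∧ x ∈ C ∧ y ∈ C := by
  obtain ⟨B, hB, hxB, hyB, hB'⟩ := h
  have hxy : x ≠ y := fun h => hyB (h ▸ hxB)
  have hdep : M.Dep (insert y B) := hB.insert_dep ⟨hyE, hyB⟩
  obtain ⟨C, hC, hCsub⟩ := exists_cct_of_dep M hdep
  have hyC : y ∈ C := by
    by_contra hyC
    refine hC.dep.not_indep (hB.indep.subset ?_)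
    intro z hz
    rcases hCsub hz with rfl | hzB
    · exact absurd hz hyC
    · exact hzB
  have hxC : x ∈ C := by
    by_contra hxC
    refine hC.dep.not_indep (hB'.indep.subset ?_)
    intro z hz
    rcases hCsub hz with rfl | hzB
    · exact mem_insert _ _
    · exact mem_insert_of_mem _ ⟨hzB, fun h => hxC (mem_singleton_iff.mp h ▸ hz)⟩
  exact ⟨C, hC, hxC, hyC⟩

lemma exchPair_dual (hxE : x ∈ M.E) (hyE : y ∈ M.E) (h : ExchPair M x y) :
    ExchPair M✶ y x := by
  obtain ⟨B, hB, hxB, hyB, hB'⟩ := h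
  have hxy : x ≠ y := fun h => hyB (h ▸ hxB)
  refine ⟨M.E \ B, hB.compl_isBase_dual, (show y ∈ M.E \ B from ⟨hyE, hyB⟩), fun h => h.2 hxB, ?_⟩
  have hset : insert x ((M.E \ B) \ {y}) = M.E \ (insert y (B \ {x})) := by
    ext z
    simp only [mem_insert_iff, mem_diff, mem_singleton_iff]
    constructor
    · rintro (rfl | ⟨⟨hzE, hzB⟩, hzy⟩)
      · exact ⟨hxE, by
          rintro (h | h)
          · exact hxy h
          · exact h.2 rfl⟩
      · exact ⟨hzE, by
          rintro (h | h)
          · exact hzy h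
          · exact hzB h.1⟩
    · rintro ⟨hzE, hz⟩
      rw [not_or] at hz
      rcases eq_or_ne z x with rfl | hzx
      · exact Or.inl rfl
      · exact Or.inr ⟨⟨hzE, fun hzB => hz.2 ⟨hzB, hzx⟩⟩, hz.1⟩
  rw [hset]
  exact hB'.compl_isBase_dual

lemma conn_dual (M : Matroid α) [M.Finite] (h : Conn M) : Conn M✶ := by
  refine ⟨by rw [dual_ground]; exact h.1, fun x y hx hy => ?_⟩
  rw [dual_ground] at hx hy
  rcases h.2 hx hy with rfl | ⟨C, hC, hxC, hyC⟩
  · exact Or.inl rfl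
  rcases eq_or_ne x y with rfl | hxy
  · exact Or.inl rfl
  right
  have hP : ExchPair M x y := exchPair_of_cct hC hxC hyC hxy
  have hP' : ExchPair M✶ y x := exchPair_dual hx hy hP
  obtain ⟨C', hC', hyC', hxC'⟩ := cct_of_exchPair (by rwa [dual_ground]) hP'
  exact ⟨C', hC', hxC', hyC'⟩

/-! ### Single loop / coloop matroids -/

lemma single_dual_dep_iff {N : Matroid α} {e : α} (hE : N.E = {e}) :
    N✶.Dep {e} ↔ N.Indep {e} := by
  have heE : e ∈ N.E := by rw [hE]; rfl
  constructor
  · intro hdep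
    by_contra hind
    have hbase : N.IsBase ∅ := by
      rw [isBase_iff_maximal_indep]
      refine ⟨N.empty_indep, fun J hJ _ => ?_⟩
      have hJE : J ⊆ {e} := hE ▸ hJ.subset_ground
      rcases subset_singleton_iff_eq.mp hJE with rfl | rfl
      · exact le_refl _
      · exact absurd hJ hind
    exact hdep.not_indep (dual_indep_iff_exists'.mpr
      ⟨by rw [hE], ⟨∅, hbase, disjoint_empty _⟩⟩)
  · intro hind
    have hbase : N.IsBase {e} := by
      rw [isBase_iff_maximal_indep]
      refine ⟨hind, fun J hJ hsub => ?_⟩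
      have : J ⊆ {e} := hE ▸ hJ.subset_ground
      exact this
    rw [dep_iff]
    refine ⟨fun hdind => ?_, by rw [dual_ground, hE]⟩
    obtain ⟨-, B, hB, hdj⟩ := dual_indep_iff_exists'.mp hdind
    have hBe : B = ∅ := by
      rw [← subset_empty_iff]
      intro z hz
      have : z ∈ N.E := hB.subset_ground hz
      rw [hE] at this
      exact absurd rfl (hdj.symm.ne_of_mem hz (this ▸ rfl))
    rw [hBe] at hB
    have := hB.eq_of_subset_indep hind (empty_subset _)
    exact (singleton_ne_empty e) this.symm

lemma isLoopMatroid_dual_iff {N : Matroid α} : IsLoopMatroid N✶ ↔ IsColoopMatroid N := by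
  constructor
  · rintro ⟨e, hE, hdep⟩
    rw [dual_ground] at hE
    exact ⟨e, hE, (single_dual_dep_iff hE).mp hdep⟩
  · rintro ⟨e, hE, hind⟩
    exact ⟨e, by rwa [dual_ground], (single_dual_dep_iff hE).mpr hind⟩

lemma isColoopMatroid_dual_iff {N : Matroid α} : IsColoopMatroid N✶ ↔ IsLoopMatroid N := by
  constructor
  · rintro ⟨e, hE, hind⟩
    rw [dual_ground] at hE
    refine ⟨e, hE, ?_⟩
    rw [dep_iff]
    refine ⟨fun h => ?_, by rw [hE]⟩
    exact ((single_dual_dep_iff hE).mpr h).not_indep hind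
  · rintro ⟨e, hE, hdep⟩
    refine ⟨e, by rwa [dual_ground], ?_⟩
    by_contra hnind
    have hd : N✶.Dep {e} := ⟨hnind, by rw [dual_ground, hE]⟩
    exact hdep.not_indep ((single_dual_dep_iff hE).mp hd)

/-! ### Chains of sets indexed by `Fin` -/

lemma chain_mono_aux {n : ℕ} {F : Fin (n+1) → Set α}
    (h : ∀ k : Fin n, F k.castSucc ⊆ F k.succ) (i : Fin (n+1)) :
    ∀ (d : ℕ) (hd : (i : ℕ) + d < n + 1), F i ⊆ F ⟨(i : ℕ) + d, hd⟩ := by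
  intro d
  induction d with
  | zero => intro hd; exact subset_rfl
  | succ d ih =>
    intro hd
    have hd' : (i : ℕ) + d < n + 1 := by omega
    have hk : (i : ℕ) + d < n := by omega
    exact (ih hd').trans (h ⟨(i : ℕ) + d, hk⟩)

lemma chain_mono {n : ℕ} {F : Fin (n+1) → Set α}
    (h : ∀ k : Fin n, F k.castSucc ⊆ F k.succ) {i j : Fin (n+1)} (hij : i ≤ j) :
    F i ⊆ F j := by
  have hd : (j : ℕ) = (i : ℕ) + (j - i : ℕ) := by
    have := (Fin.le_def.mp hij)
    omega
  have hlt : (i : ℕ) + ((j : ℕ) - (i : ℕ)) < n + 1 := by rw [← hd]; exact j.isLt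
  have hj : j = ⟨(i : ℕ) + ((j : ℕ) - (i : ℕ)), hlt⟩ := Fin.ext hd
  rw [hj]
  exact chain_mono_aux h i _ hlt

lemma chain_anti_aux {n : ℕ} {F : Fin (n+1) → Set α}
    (h : ∀ k : Fin n, F k.succ ⊆ F k.castSucc) (i : Fin (n+1)) :
    ∀ (d : ℕ) (hd : (i : ℕ) + d < n + 1), F ⟨(i : ℕ) + d, hd⟩ ⊆ F i := by
  intro d
  induction d with
  | zero => intro hd; exact subset_rfl
  | succ d ih =>
    intro hd
    have hd' : (i : ℕ) + d < n + 1 := by omega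
    have hk : (i : ℕ) + d < n := by omega
    exact (h ⟨(i : ℕ) + d, hk⟩).trans (ih hd')

lemma chain_anti {n : ℕ} {F : Fin (n+1) → Set α}
    (h : ∀ k : Fin n, F k.succ ⊆ F k.castSucc) {i j : Fin (n+1)} (hij : i ≤ j) :
    F j ⊆ F i := by
  have hd : (j : ℕ) = (i : ℕ) + (j - i : ℕ) := by
    have := (Fin.le_def.mp hij)
    omega
  have hlt : (i : ℕ) + ((j : ℕ) - (i : ℕ)) < n + 1 := by rw [← hd]; exact j.isLt
  have hj : j = ⟨(i : ℕ) + ((j : ℕ) - (i : ℕ)), hlt⟩ := Fin.ext hd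
  rw [hj]
  exact chain_anti_aux h i _ hlt

/-! ### Set complement helpers -/

lemma compl_ssubset {E A B : Set α} (hB : B ⊆ E) (h : A ⊂ B) : E \ B ⊂ E \ A := by
  obtain ⟨x, hxB, hxA⟩ := exists_of_ssubset h
  refine ⟨diff_subset_diff_right h.subset, fun hc => ?_⟩
  exact (hc ⟨hB hxB, hxA⟩).2 hxB

lemma compl_diff_compl {E A B : Set α} (hB : B ⊆ E) : (E \ A) \ (E \ B) = B \ A := by
  ext z
  simp only [mem_diff, not_and, not_not]
  constructor
  · rintro ⟨⟨hzE, hzA⟩, hz⟩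
    exact ⟨hz hzE, hzA⟩
  · rintro ⟨hzB, hzA⟩
    exact ⟨⟨hB hzB, hzA⟩, fun _ => hzB⟩

lemma diff_ssubset_left {A B C : Set α} (hC : C ⊆ A) (h : A ⊂ B) : A \ C ⊂ B \ C := by
  obtain ⟨x, hxB, hxA⟩ := exists_of_ssubset h
  refine ⟨diff_subset_diff_left h.subset, fun hc => ?_⟩
  exact hxA (hc ⟨hxB, fun hx => hxA (hC hx)⟩).1

lemma diff_diff_diff_cancel {A B C : Set α} (hC : C ⊆ B) : (A \ C) \ (B \ C) = A \ B := by
  ext z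
  simp only [mem_diff, not_and, not_not]
  constructor
  · rintro ⟨⟨hzA, hzC⟩, hz⟩
    exact ⟨hzA, fun hzB => hzC (hz hzB)⟩
  · rintro ⟨hzA, hzB⟩
    exact ⟨⟨hzA, fun hz => hzB (hC hz)⟩, fun hz => absurd hz hzB⟩

end ActiveBij

namespace ActiveBij

/-- Duality of minors and of connected filtrations, and the restriction/contraction of a
connected filtration to the two sides of its cyclic flat. -/
theorem stmt14 {α : Type*} [LinearOrder α] (M : Matroid α) [M.Finite] :
    (∀ F G : Set α, F ⊆ G → G ⊆ M.E →
      (minor M G F)✶ = minor M✶ (M.E \ F) (M.E \ G)) ∧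
    (∀ f : Filtration α, IsConnFiltration M f →
      IsConnFiltration M✶ (dualFil M f) ∧
      (dualFil M f).F 0 = M.E \ f.F 0 ∧
      (∀ k : Fin f.ε, intMinor M✶ (dualFil M f) k = (extMinor M f k)✶) ∧
      (∀ k : Fin f.ι, extMinor M✶ (dualFil M f) k = (intMinor M f k)✶) ∧
      IsConnFiltration (M ↾ f.F 0)
        (⟨0, f.ε, fun _ => f.F 0, f.F'⟩ : Filtration α) ∧
      (⟨0, f.ε, fun _ => f.F 0, f.F'⟩ : Filtration α).F 0 = f.F 0 ∧
      IsConnFiltration (con M (f.F 0))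
        (⟨f.ι, 0, fun k => f.F k \ f.F 0, fun _ => ∅⟩ : Filtration α) ∧
      (⟨f.ι, 0, fun k => f.F k \ f.F 0, fun _ => ∅⟩ : Filtration α).F 0 = (∅ : Set α)) := by
  constructor
  · exact fun F G hFG hG => minor_dual hFG hG
  intro f hf
  obtain ⟨hfil, hint, hext⟩ := hf
  obtain ⟨hlast', h00, hlast, hssF, hssF', hleastF, hleastF'⟩ := hfil
  have hFmono : ∀ {i j : Fin (f.ι+1)}, i ≤ j → f.F i ⊆ f.F j :=
    fun hij => chain_mono (fun k => (hssF k).subset) hij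
  have hF'anti : ∀ {i j : Fin (f.ε+1)}, i ≤ j → f.F' j ⊆ f.F' i :=
    fun hij => chain_anti (fun k => (hssF' k).subset) hij
  have hFE : ∀ i, f.F i ⊆ M.E := fun i => hlast ▸ hFmono (Fin.le_last i)
  have hF'E : ∀ i, f.F' i ⊆ M.E := fun i =>
    (hF'anti (Fin.zero_le i)).trans (h00 ▸ hFE 0)
  -- the two families of dual minor identities
  have hIntDual : ∀ k : Fin f.ε,
      intMinor M✶ (dualFil M f) k = (extMinor M f k)✶ := by
    intro k
    have := minor_dual (M := M) (hF'anti (Fin.castSucc_le_succ k)) (hF'E k.castSucc)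
    rw [extMinor, this]
    rfl
  have hExtDual : ∀ k : Fin f.ι,
      extMinor M✶ (dualFil M f) k = (intMinor M f k)✶ := by
    intro k
    have := minor_dual (M := M) (hFmono (Fin.castSucc_le_succ k)) (hFE k.succ)
    rw [intMinor, this]
    rfl
  -- finiteness of the minors
  have hIntFin : ∀ k : Fin f.ι, (intMinor M f k).Finite := fun k =>
    ⟨M.ground_finite.subset ((diff_subset.trans (hFE k.succ)) :
      (intMinor M f k).E ⊆ M.E)⟩
  have hExtFin : ∀ k : Fin f.ε, (extMinor M f k).Finite := fun k =>
    ⟨M.ground_finite.subset ((diff_subset.trans (hF'E k.castSucc)) :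
      (extMinor M f k).E ⊆ M.E)⟩
  -- the dual filtration is a filtration of M✶
  have hdualfil : IsFiltration M✶ (dualFil M f) := by
    refine ⟨?_, ?_, ?_, ?_, ?_, ?_, ?_⟩
    · show M.E \ f.F (Fin.last f.ι) = ∅
      rw [hlast, diff_self]
    · show M.E \ f.F 0 = M.E \ f.F' 0
      rw [h00]
    · show M.E \ f.F' (Fin.last f.ε) = M✶.E
      rw [hlast', diff_empty, dual_ground]
    · intro k
      exact compl_ssubset (hF'E k.castSucc) (hssF' k)
    · intro k
      exact compl_ssubset (hFE k.succ) (hssF k)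
    · intro j k hjk a b ha hb
      rw [show (dualFil M f).F j.succ \ (dualFil M f).F j.castSucc =
        f.F' j.castSucc \ f.F' j.succ from compl_diff_compl (hF'E j.castSucc)] at ha
      rw [show (dualFil M f).F k.succ \ (dualFil M f).F k.castSucc =
        f.F' k.castSucc \ f.F' k.succ from compl_diff_compl (hF'E k.castSucc)] at hb
      exact hleastF' j k hjk a b ha hb
    · intro j k hjk a b ha hb
      rw [show (dualFil M f).F' j.castSucc \ (dualFil M f).F' j.succ =
        f.F j.succ \ f.F j.castSucc from compl_diff_compl (hFE j.succ)] at ha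
      rw [show (dualFil M f).F' k.castSucc \ (dualFil M f).F' k.succ =
        f.F k.succ \ f.F k.castSucc from compl_diff_compl (hFE k.succ)] at hb
      exact hleastF j k hjk a b ha hb
  refine ⟨⟨hdualfil, ?_, ?_⟩, ?_, hIntDual, hExtDual, ⟨?_, ?_, ?_⟩, rfl, ⟨?_, ?_, ?_⟩, ?_⟩
  · -- internal minors of the dual filtration
    intro k
    haveI := hExtFin k
    rw [hIntDual k]
    constructor
    · exact conn_dual _ (hext k).1
    · rw [isLoopMatroid_dual_iff]
      exact (hext k).2
  · -- external minors of the dual filtration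
    intro k
    haveI := hIntFin k
    rw [hExtDual k]
    constructor
    · exact conn_dual _ (hint k).1
    · rw [isColoopMatroid_dual_iff]
      exact (hint k).2
  · -- (dualFil M f).F 0 = M.E \ f.F 0
    show M.E \ f.F' 0 = M.E \ f.F 0
    rw [h00]
  · -- restriction filtration is a filtration
    refine ⟨hlast', h00, ?_, fun k => k.elim0, hssF', fun j => j.elim0, hleastF'⟩
    rfl
  · exact fun k => k.elim0
  · -- external minors of the restriction filtration
    intro k
    have heq : extMinor (M ↾ f.F 0) (⟨0, f.ε, fun _ => f.F 0, f.F'⟩ : Filtration α) k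
        = extMinor M f k := by
      rw [extMinor, extMinor]
      exact minor_restrict ((hF'anti (Fin.zero_le k.castSucc)).trans h00.subset)
    rw [heq]
    exact hext k
  · -- contraction filtration is a filtration
    refine ⟨rfl, diff_self.symm, ?_, ?_, fun k => k.elim0, ?_, fun j => j.elim0⟩
    · show f.F (Fin.last f.ι) \ f.F 0 = (con M (f.F 0)).E
      rw [con_ground, hlast]
    · intro k
      exact diff_ssubset_left (hFmono (Fin.zero_le k.castSucc)) (hssF k)
    · intro j k hjk a b ha hb
      rw [show (f.F j.succ \ f.F 0) \ (f.F j.castSucc \ f.F 0) =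
        f.F j.succ \ f.F j.castSucc from
        diff_diff_diff_cancel (hFmono (Fin.zero_le j.castSucc))] at ha
      rw [show (f.F k.succ \ f.F 0) \ (f.F k.castSucc \ f.F 0) =
        f.F k.succ \ f.F k.castSucc from
        diff_diff_diff_cancel (hFmono (Fin.zero_le k.castSucc))] at hb
      exact hleastF j k hjk a b ha hb
  · -- internal minors of the contraction filtration
    intro k
    have heq : intMinor (con M (f.F 0)) (⟨f.ι, 0, fun k => f.F k \ f.F 0,
        fun _ => ∅⟩ : Filtration α) k = intMinor M f k := by
      rw [intMinor, intMinor]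
      exact minor_con_eq (hFmono (Fin.zero_le k.castSucc))
        (hFmono (Fin.castSucc_le_succ k)) (hFE k.succ)
    rw [heq]
    exact hint k
  · exact fun k => k.elim0
  · exact diff_self

end ActiveBij
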